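/- Fix a Hessenberg function h : {1,…,n} → {1,…,n} and fix j, k ∈ {1,…,n}. For each permutation w of {1,…,n}, define g_{j,k}(w) ∈ ℚ[t_1,…,t_n] by g_{j,k}(w) := Π_{ℓ=j+1}^{h(j)} (t_k − t_{w(ℓ)}) if k ∈ {w(1),…,w(j)}, and g_{j,k}(w) := 0 otherwise (with the empty product equal to 1). Then for every permutation w and every pair a, b ∈ {1,…,n} with a < b and b ≤ h(a), the polynomial t_{w(a)} − t_{w(b)} divides g_{j,k}(w) − g_{j,k}(w∘(a b)) in ℚ[t_1,…,t_n], where (a b) denotes the transposition of a and b. -/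

import Mathlib

/-- A Hessenberg function `h : {1,…,n} → {1,…,n}`. -/
def IsHessenberg (n : ℕ) (h : ℕ → ℕ) : Prop :=
  (∀ i, 1 ≤ i → i ≤ n → i ≤ h i ∧ h i ≤ n) ∧
  (∀ i, 1 ≤ i → i + 1 ≤ n → h i ≤ h (i + 1))

/-- The variable `t_k` (for `1 ≤ k ≤ n`) in `ℚ[t_1,…,t_n]`, realized as
`MvPolynomial (Fin n) ℚ` (with the variable of index `k-1` being `t_k`). -/
noncomputable def tvar (n k : ℕ) : MvPolynomial (Fin n) ℚ :=
  if h : 1 ≤ k ∧ k ≤ n then MvPolynomial.X ⟨k - 1, by omega⟩ else 0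

/-- `g_{j,k}(w) := Π_{ℓ=j+1}^{h(j)} (t_k − t_{w(ℓ)})` if `k ∈ {w(1),…,w(j)}`, and `0`
otherwise (with the empty product equal to `1`). -/
noncomputable def gjk (n : ℕ) (h : ℕ → ℕ) (j k : ℕ) (w : ℕ → ℕ) :
    MvPolynomial (Fin n) ℚ :=
  if k ∈ (Finset.Icc 1 j).image w then
    ∏ l ∈ Finset.Icc (j + 1) (h j), (tvar n k - tvar n (w l))
  else 0

lemma hess_mono {n : ℕ} {h : ℕ → ℕ} (hh : IsHessenberg n h) :
    ∀ i j, 1 ≤ i → i ≤ j → j ≤ n → h i ≤ h j := by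
  intro i j h1 hij hjn
  induction j with
  | zero => omega
  | succ m ih =>
    rcases Nat.lt_or_ge i (m + 1) with hlt | hge
    · have hm : h i ≤ h m := ih (by omega) (by omega)
      exact hm.trans (hh.2 m (by omega) hjn)
    · have : i = m + 1 := by omega
      exact le_of_eq (by rw [this])

/-- For `w` a permutation of `{1,…,n}` (modelled as `w : Equiv.Perm ℕ` fixing every point
outside `{1,…,n}`) and `a, b ∈ {1,…,n}` with `a < b ≤ h(a)`, the polynomial
`t_{w(a)} − t_{w(b)}` divides `g_{j,k}(w) − g_{j,k}(w ∘ (a b))` in `ℚ[t_1,…,t_n]`. -/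
theorem stmt15 (n : ℕ) (h : ℕ → ℕ) (hh : IsHessenberg n h)
    (j k : ℕ) (hj : 1 ≤ j) (hjn : j ≤ n) (hk : 1 ≤ k) (hkn : k ≤ n)
    (w : Equiv.Perm ℕ) (hw : ∀ r, r ∉ Finset.Icc 1 n → w r = r) :
    ∀ a b, 1 ≤ a → a < b → b ≤ n → b ≤ h a →
      (tvar n (w a) - tvar n (w b)) ∣
        (gjk n h j k ⇑w - gjk n h j k fun r => w (Equiv.swap a b r)) := by
  intro a b ha hab hbn hbha
  set s : Equiv.Perm ℕ := Equiv.swap a b with hs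
  have hsupp : {x | s x ≠ x} ⊆ {a, b} := by
    intro x hx
    simp only [hs, Set.mem_setOf_eq] at hx
    by_contra hc
    simp only [Set.mem_insert_iff, Set.mem_singleton_iff] at hc
    push_neg at hc
    exact hx (Equiv.swap_apply_of_ne_of_ne hc.1 hc.2)
  have hsa : s a = b := Equiv.swap_apply_left a b
  have hsb : s b = a := Equiv.swap_apply_right a b
  have hsid : ∀ x, x ≠ a → x ≠ b → s x = x := fun x h1 h2 =>
    Equiv.swap_apply_of_ne_of_ne h1 h2
  set S : Finset ℕ := Finset.Icc (j + 1) (h j) with hS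
  set f : ℕ → MvPolynomial (Fin n) ℚ := fun x => tvar n k - tvar n (w x) with hf
  have hgjk : ∀ v : ℕ → ℕ, gjk n h j k v =
      if k ∈ (Finset.Icc 1 j).image v then ∏ l ∈ S, (tvar n k - tvar n (v l)) else 0 :=
    fun v => rfl
  rcases le_or_gt b j with hbj | hjb
  · -- both a, b ≤ j : everything unchanged
    have hpres : ∀ r ∈ Finset.Icc 1 j, s r ∈ Finset.Icc 1 j := by
      intro r hr
      simp only [Finset.mem_Icc] at hr ⊢
      by_cases h1 : r = a
      · rw [h1, hsa]; omega
      · by_cases h2 : r = b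
        · rw [h2, hsb]; omega
        · rw [hsid r h1 h2]; omega
    have himg : (Finset.Icc 1 j).image (fun r => w (s r)) = (Finset.Icc 1 j).image w := by
      ext x
      simp only [Finset.mem_image]
      constructor
      · rintro ⟨r, hr, rfl⟩
        exact ⟨s r, hpres r hr, rfl⟩
      · rintro ⟨r, hr, rfl⟩
        exact ⟨s r, hpres r hr, by simp [hs, Equiv.swap_apply_self]⟩
    have hprod : (∏ l ∈ S, (tvar n k - tvar n (w (s l)))) = ∏ l ∈ S, (tvar n k - tvar n (w l)) := by
      refine Finset.prod_congr rfl fun l hl => ?_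
      simp only [hS, Finset.mem_Icc] at hl
      rw [hsid l (by omega) (by omega)]
    rw [hgjk, hgjk, himg, hprod, sub_self]
    exact dvd_zero _
  · rcases le_or_gt a j with haj | hja
    · -- a ≤ j < b
      have hbS : b ∈ S := by
        have : b ≤ h j := hbha.trans (hess_mono hh a j ha (by omega) hjn)
        simp only [hS, Finset.mem_Icc]; omega
      have haS : a ∉ S := by simp only [hS, Finset.mem_Icc]; omega
      have hrest : ∀ l ∈ S.erase b, w (s l) = w l := by
        intro l hl
        have hlb := Finset.ne_of_mem_erase hl
        have hlS := Finset.mem_of_mem_erase hl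
        rw [hsid l (fun e => haS (e ▸ hlS)) hlb]
      have hprodsplit : (∏ l ∈ S, (tvar n k - tvar n (w l))) =
          (tvar n k - tvar n (w b)) * ∏ l ∈ S.erase b, (tvar n k - tvar n (w l)) :=
        (Finset.mul_prod_erase S _ hbS).symm
      have hprodsplit' : (∏ l ∈ S, (tvar n k - tvar n (w (s l)))) =
          (tvar n k - tvar n (w a)) * ∏ l ∈ S.erase b, (tvar n k - tvar n (w l)) := by
        rw [← Finset.mul_prod_erase S _ hbS, hsb]
        congr 1
        exact Finset.prod_congr rfl fun l hl => by rw [hrest l hl]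
      by_cases hka : k = w a
      · -- g(w') = 0, g(w) has factor (t_{w a} - t_{w b})
        have h1 : k ∈ (Finset.Icc 1 j).image ⇑w :=
          Finset.mem_image.2 ⟨a, Finset.mem_Icc.2 ⟨ha, haj⟩, hka.symm⟩
        have h2 : k ∉ (Finset.Icc 1 j).image (fun r => w (s r)) := by
          intro hc
          rcases Finset.mem_image.1 hc with ⟨r, hr, hre⟩
          have : s r = a := w.injective (hre.trans hka)
          have : r = b := by
            have := congrArg s this
            rwa [Equiv.swap_apply_self, hsa] at this
          simp only [Finset.mem_Icc] at hr; omega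
        rw [hgjk, hgjk, if_pos h1, if_neg h2, sub_zero, hprodsplit, hka]
        exact Dvd.intro _ rfl
      · by_cases hkb : k = w b
        · -- g(w) = 0, g(w') has factor (t_{w b} - t_{w a})
          have h1 : k ∉ (Finset.Icc 1 j).image ⇑w := by
            intro hc
            rcases Finset.mem_image.1 hc with ⟨r, hr, hre⟩
            have : r = b := w.injective (hre.trans hkb)
            simp only [Finset.mem_Icc] at hr; omega
          have h2 : k ∈ (Finset.Icc 1 j).image (fun r => w (s r)) :=
            Finset.mem_image.2 ⟨a, Finset.mem_Icc.2 ⟨ha, haj⟩, by rw [hsa, hkb]⟩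
          rw [hgjk, hgjk, if_neg h1, if_pos h2, zero_sub, hprodsplit', hkb]
          refine ⟨∏ l ∈ S.erase b, (tvar n (w b) - tvar n (w l)), ?_⟩
          ring
        · -- k ∉ {w a, w b}
          have hcond : k ∈ (Finset.Icc 1 j).image (fun r => w (s r)) ↔
              k ∈ (Finset.Icc 1 j).image ⇑w := by
            constructor
            · intro hc
              rcases Finset.mem_image.1 hc with ⟨r, hr, hre⟩
              have hra : s r ≠ a := fun e => hka (by rw [← hre, e])
              have hrb : s r ≠ b := fun e => hkb (by rw [← hre, e])
              have hr1 : r ≠ b := fun e => hra (by rw [e, hsb])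
              have hr2 : r ≠ a := fun e => hrb (by rw [e, hsa])
              rw [hsid r hr2 hr1] at hre
              exact Finset.mem_image.2 ⟨r, hr, hre⟩
            · intro hc
              rcases Finset.mem_image.1 hc with ⟨r, hr, hre⟩
              have hr1 : r ≠ a := fun e => hka (by rw [← hre, e])
              have hr2 : r ≠ b := fun e => hkb (by rw [← hre, e])
              exact Finset.mem_image.2 ⟨r, hr, by rw [hsid r hr1 hr2]; exact hre⟩
          rw [hgjk, hgjk]
          by_cases hc : k ∈ (Finset.Icc 1 j).image ⇑w
          · rw [if_pos hc, if_pos (hcond.2 hc), hprodsplit, hprodsplit']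
            refine ⟨∏ l ∈ S.erase b, (tvar n k - tvar n (w l)), ?_⟩
            ring
          · rw [if_neg hc, if_neg (fun hd => hc (hcond.1 hd)), sub_self]
            exact dvd_zero _
    · -- j < a < b
      have himg : (Finset.Icc 1 j).image (fun r => w (s r)) = (Finset.Icc 1 j).image w := by
        refine Finset.image_congr fun r hr => ?_
        simp only [Finset.mem_coe, Finset.mem_Icc] at hr
        rw [hsid r (by omega) (by omega)]
      rcases le_or_gt b (h j) with hbhj | hbhj
      · -- both a, b ∈ S
        have hprod : (∏ l ∈ S, (tvar n k - tvar n (w (s l)))) =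
            ∏ l ∈ S, (tvar n k - tvar n (w l)) := by
          refine Equiv.Perm.prod_comp s S f ?_
          intro x hx
          have := hsupp hx
          simp only [Set.mem_insert_iff, Set.mem_singleton_iff] at this
          simp only [hS, Finset.coe_Icc, Set.mem_Icc]
          omega
        rw [hgjk, hgjk, himg, hprod, sub_self]
        exact dvd_zero _
      · rcases le_or_gt a (h j) with hahj | hahj
        · -- a ∈ S, b ∉ S
          have haS : a ∈ S := by simp only [hS, Finset.mem_Icc]; omega
          have hbS : b ∉ S := by simp only [hS, Finset.mem_Icc]; omega
          have hrest : ∀ l ∈ S.erase a, w (s l) = w l := by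
            intro l hl
            have hla := Finset.ne_of_mem_erase hl
            have hlS := Finset.mem_of_mem_erase hl
            rw [hsid l hla (fun e => hbS (e ▸ hlS))]
          have h1 : (∏ l ∈ S, (tvar n k - tvar n (w l))) =
              (tvar n k - tvar n (w a)) * ∏ l ∈ S.erase a, (tvar n k - tvar n (w l)) :=
            (Finset.mul_prod_erase S _ haS).symm
          have h2 : (∏ l ∈ S, (tvar n k - tvar n (w (s l)))) =
              (tvar n k - tvar n (w b)) * ∏ l ∈ S.erase a, (tvar n k - tvar n (w l)) := by
            rw [← Finset.mul_prod_erase S _ haS, hsa]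
            congr 1
            exact Finset.prod_congr rfl fun l hl => by rw [hrest l hl]
          rw [hgjk, hgjk, himg]
          by_cases hc : k ∈ (Finset.Icc 1 j).image ⇑w
          · rw [if_pos hc, if_pos hc, h1, h2]
            refine ⟨-∏ l ∈ S.erase a, (tvar n k - tvar n (w l)), ?_⟩
            ring
          · rw [if_neg hc, if_neg hc, sub_self]
            exact dvd_zero _
        · -- both a, b ∉ S
          have hprod : (∏ l ∈ S, (tvar n k - tvar n (w (s l)))) =
              ∏ l ∈ S, (tvar n k - tvar n (w l)) := by
            refine Finset.prod_congr rfl fun l hl => ?_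
            simp only [hS, Finset.mem_Icc] at hl
            rw [hsid l (by omega) (by omega)]
          rw [hgjk, hgjk, himg, hprod, sub_self]
          exact dvd_zero _
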